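/- Let N ≥ 1 and let B = aH − Σᵢ bᵢEᵢ be a nonzero class in L_N satisfying B·B = 0 and K·B = 0 (equivalently a² = Σᵢ bᵢ² and 3a = Σᵢ bᵢ). If a ≥ 0, then a ≥ 3. Moreover, if a = 3, then every bᵢ ∈ {0,1} and exactly nine indices i satisfy bᵢ = 1; that is, B = 3H − E_{j₁} − ⋯ − E_{j₉} for some nine distinct indices j₁,…,j₉. (Lemma 4.2(2) of the paper.) -/
import Mathlib


/-- Lemma 4.2(2): let `B = aH − Σᵢ bᵢEᵢ` be a nonzero class with `B·B = 0` and
`K·B = 0`, i.e. `a² = Σᵢ bᵢ²` and `3a = Σᵢ bᵢ`. If `a ≥ 0` then `a ≥ 3`, and if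
`a = 3` then every `bᵢ ∈ {0,1}` and exactly nine of the `bᵢ` equal `1`, i.e.
`B = 3H − E_{j₁} − ⋯ − E_{j₉}`. -/
theorem stmt5 (N : ℕ) (hN : 1 ≤ N) (a : ℤ) (b : Fin N → ℤ)
    (hne : a ≠ 0 ∨ ∃ i, b i ≠ 0)
    (h1 : a ^ 2 = ∑ i, (b i) ^ 2)
    (h2 : 3 * a = ∑ i, b i)
    (ha : 0 ≤ a) :
    3 ≤ a ∧
      (a = 3 → (∀ i, b i = 0 ∨ b i = 1) ∧
        (Finset.univ.filter (fun i => b i = 1)).card = 9) := by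
  have key : ∀ x : ℤ, x ≤ x ^ 2 := by
    intro x
    rcases le_or_gt x 0 with h | h
    · nlinarith
    · have : 1 ≤ x := h
      nlinarith
  have hsum : (3 : ℤ) * a ≤ a ^ 2 := by
    rw [h1, h2]; exact Finset.sum_le_sum fun i _ => key (b i)
  have hapos : 0 < a := by
    rcases lt_or_eq_of_le ha with h | h
    · exact h
    · exfalso
      have ha0 : a = 0 := h.symm
      have hb0 : ∀ i ∈ Finset.univ, (b i) ^ 2 = 0 := by
        have : ∑ i, (b i) ^ 2 = 0 := by rw [← h1, ha0]; ring
        exact (Finset.sum_eq_zero_iff_of_nonneg (fun i _ => sq_nonneg _)).1 this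
      rcases hne with h' | ⟨i, hi⟩
      · exact h' ha0
      · exact hi (pow_eq_zero_iff (by norm_num) |>.1 (hb0 i (Finset.mem_univ i)))
  have h3a : 3 ≤ a := by nlinarith
  refine ⟨h3a, fun ha3 => ?_⟩
  subst ha3
  have hdiff : ∑ i, ((b i) ^ 2 - b i) = 0 := by
    rw [Finset.sum_sub_distrib, ← h1, ← h2]; ring
  have heach : ∀ i ∈ Finset.univ, (b i) ^ 2 - b i = 0 :=
    (Finset.sum_eq_zero_iff_of_nonneg (fun i _ => by
      have := key (b i); omega)).1 hdiff
  have h01 : ∀ i, b i = 0 ∨ b i = 1 := by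
    intro i
    have := heach i (Finset.mem_univ i)
    have : b i * (b i - 1) = 0 := by nlinarith
    rcases mul_eq_zero.1 this with h | h
    · left; exact h
    · right; omega
  refine ⟨h01, ?_⟩
  have : ∑ i, b i = ∑ i ∈ Finset.univ.filter (fun i => b i = 1), (1 : ℤ) := by
    rw [Finset.sum_filter]
    apply Finset.sum_congr rfl
    intro i _
    rcases h01 i with h | h <;> simp [h]
  rw [Finset.sum_const, nsmul_eq_mul, mul_one] at this
  have h9 : (9 : ℤ) = ((Finset.univ.filter (fun i => b i = 1)).card : ℤ) := by
    rw [← this, ← h2]; ring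
  omega
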